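/- Let k ≥ 2 be an integer and let Γ be a connected bipartite k-regular simple graph on v vertices. Suppose f₀, f₁, …, f_t are real numbers with f₀ > 0 and f_j > 0 for all 1 ≤ j ≤ t, let f(x) = Σ_{i=0}^{t} f_i · 𝓕_{0,i}(x), and assume f(k²) > 0 and f(μ²) ≤ 0 for every eigenvalue μ of the adjacency matrix of Γ with μ ≠ k and μ ≠ −k. If v = 2·f(k²)/f₀, then the girth of Γ is at least 2t+2. -/

import Mathlib

open Polynomial Matrix

/-- The orthogonal polynomials `F_i` defined by `F_0 = 1`, `F_1 = x`, `F_2 = x^2 - k`,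
and `F_i = x F_{i-1} - (k-1) F_{i-2}` for `i ≥ 3`. -/
noncomputable def Fpoly (k : ℝ) : ℕ → Polynomial ℝ
  | 0 => 1
  | 1 => X
  | 2 => X ^ 2 - C k
  | (n + 3) => X * Fpoly k (n + 2) - C (k - 1) * Fpoly k (n + 1)

/-- `G_i = ∑_{j=0}^{⌊i/2⌋} F_{i-2j}`. -/
noncomputable def Gpoly (k : ℝ) (i : ℕ) : Polynomial ℝ :=
  ∑ j ∈ Finset.range (i / 2 + 1), Fpoly k (i - 2 * j)

set_option linter.unusedSectionVars false
set_option maxHeartbeats 1000000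

section Aux
open Finset
variable {N : ℕ} (G : SimpleGraph (Fin N)) [DecidableRel G.Adj]

lemma card_dart_eq (u v : Fin N) :
    (univ.filter fun d : G.Dart => d.toProd = (u, v)).card = if G.Adj u v then 1 else 0 := by
  split_ifs with h
  · rw [Finset.card_eq_one]
    exact ⟨⟨(u,v), h⟩, by ext d; simp [SimpleGraph.Dart.ext_iff]⟩
  · rw [Finset.card_eq_zero]
    ext d; simp only [mem_filter, mem_univ, true_and, Finset.notMem_empty, iff_false]
    intro hd; apply h; have := d.adj; rw [hd] at this; exact this

lemma card_dart_snd (u : Fin N) :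
    (univ.filter fun d : G.Dart => d.toProd.2 = u).card = G.degree u := by
  rw [← G.dart_fst_fiber_card_eq_degree u]
  apply Finset.card_nbij (fun d => d.symm)
  · intro d hd; simp_all [SimpleGraph.Dart.symm]
  · intro d hd d' hd' h
    simpa using congrArg SimpleGraph.Dart.symm h
  · intro d hd
    refine ⟨d.symm, by simp_all [SimpleGraph.Dart.symm], by simp⟩

lemma card_dart_snd_ne (u x : Fin N) (hx : G.Adj x u) :
    (univ.filter fun d : G.Dart => d.toProd.2 = u ∧ d.toProd.1 ≠ x).card = G.degree u - 1 := by
  have key := Finset.card_filter_add_card_filter_not (s := univ.filter fun d : G.Dart => d.toProd.2 = u)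
      (p := fun d : G.Dart => d.toProd.1 = x)
  rw [Finset.filter_filter, Finset.filter_filter, card_dart_snd] at key
  have h1 : (univ.filter fun d : G.Dart => d.toProd.2 = u ∧ d.toProd.1 = x).card = 1 := by
    rw [Finset.card_eq_one]
    refine ⟨⟨(x,u), hx⟩, ?_⟩
    ext d; simp [SimpleGraph.Dart.ext_iff, Prod.ext_iff, and_comm]
  rw [h1] at key
  simp only [ne_eq] at key ⊢
  omega

/-- dart-start incidence matrix -/
def Smat : Matrix (Fin N) G.Dart ℝ := fun u d => if d.toProd.1 = u then 1 else 0
/-- dart-end incidence matrix -/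
def Rmat : Matrix G.Dart (Fin N) ℝ := fun d v => if d.toProd.2 = v then 1 else 0
/-- dart-end incidence, other orientation -/
def Jmat : Matrix (Fin N) G.Dart ℝ := fun u d => if d.toProd.2 = u then 1 else 0
/-- non-backtracking dart transfer matrix -/
def Tmat : Matrix G.Dart G.Dart ℝ :=
  fun d d' => if d.toProd.2 = d'.toProd.1 ∧ d'.toProd.2 ≠ d.toProd.1 then 1 else 0

lemma sum_ind (P Q : G.Dart → Prop) [DecidablePred P] [DecidablePred Q] :
    ∑ d : G.Dart, (if P d then (1:ℝ) else 0) * (if Q d then 1 else 0)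
      = ((univ.filter fun d => P d ∧ Q d).card : ℝ) := by
  have h : ∀ d, (if P d then (1:ℝ) else 0) * (if Q d then 1 else 0) = if P d ∧ Q d then 1 else 0 := by
    intro d; by_cases h1 : P d <;> by_cases h2 : Q d <;> simp [h1, h2]
  simp_rw [h]
  rw [Finset.sum_boole]

lemma SR_eq : Smat G * Rmat G = G.adjMatrix ℝ := by
  ext u v
  rw [Matrix.mul_apply]
  simp only [Smat, Rmat]
  rw [sum_ind]
  rw [Finset.filter_congr (fun (d : G.Dart) _ => by rw [Prod.ext_iff] :
    ∀ d ∈ univ, (d.toProd.1 = u ∧ d.toProd.2 = v) ↔ d.toProd = (u,v))]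
  rw [card_dart_eq]
  simp only [SimpleGraph.adjMatrix_apply]
  split_ifs <;> simp

variable {k : ℕ}

lemma JR_eq (hreg : G.IsRegularOfDegree k) : Jmat G * Rmat G = (k:ℝ) • 1 := by
  ext u v
  rw [Matrix.mul_apply]
  simp only [Jmat, Rmat]
  rw [sum_ind]
  by_cases huv : u = v
  · subst huv
    rw [Finset.filter_congr (fun (d : G.Dart) _ => by tauto :
      ∀ d ∈ univ, (d.toProd.2 = u ∧ d.toProd.2 = u) ↔ d.toProd.2 = u)]
    rw [card_dart_snd, hreg u]
    simp [Matrix.one_apply]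
  · rw [show (univ.filter fun d : G.Dart => d.toProd.2 = u ∧ d.toProd.2 = v) = ∅ by
      ext d; simp only [mem_filter, mem_univ, true_and, Finset.notMem_empty, iff_false]
      rintro ⟨h1, h2⟩; exact huv (h1 ▸ h2)]
    simp [Matrix.one_apply, huv]

lemma AS_eq : G.adjMatrix ℝ * Smat G = Smat G * Tmat G + Jmat G := by
  ext u d'
  have hL : (G.adjMatrix ℝ * Smat G) u d' = if G.Adj u d'.toProd.1 then 1 else 0 := by
    simp only [Matrix.mul_apply, SimpleGraph.adjMatrix_apply, Smat]
    have : ∀ w, (if G.Adj u w then (1:ℝ) else 0) * (if d'.toProd.1 = w then 1 else 0)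
        = if d'.toProd.1 = w then (if G.Adj u w then 1 else 0) else 0 := by
      intro w; by_cases h1 : G.Adj u w <;> by_cases h2 : d'.toProd.1 = w <;> simp [h1, h2]
    simp_rw [this]
    rw [Finset.sum_ite_eq]
    simp
  rw [hL, Matrix.add_apply]
  have hT : (Smat G * Tmat G) u d'
      = if G.Adj u d'.toProd.1 ∧ d'.toProd.2 ≠ u then 1 else 0 := by
    rw [Matrix.mul_apply]
    simp only [Smat, Tmat]
    rw [sum_ind]
    by_cases hc : G.Adj u d'.toProd.1 ∧ d'.toProd.2 ≠ u
    · rw [show (univ.filter fun d : G.Dart => d.toProd.1 = u ∧ d.toProd.2 = d'.toProd.1 ∧ d'.toProd.2 ≠ d.toProd.1) = {⟨(u, d'.toProd.1), hc.1⟩} by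
        ext d
        simp only [mem_filter, mem_univ, true_and, Finset.mem_singleton, SimpleGraph.Dart.ext_iff, Prod.ext_iff]
        constructor
        · rintro ⟨h1, h2, h3⟩; exact ⟨h1, h2⟩
        · rintro ⟨h1, h2⟩; exact ⟨h1, h2, h1 ▸ hc.2⟩]
      simp [hc]
    · rw [show (univ.filter fun d : G.Dart => d.toProd.1 = u ∧ d.toProd.2 = d'.toProd.1 ∧ d'.toProd.2 ≠ d.toProd.1) = ∅ by
        ext d
        simp only [mem_filter, mem_univ, true_and, Finset.notMem_empty, iff_false]
        rintro ⟨h1, h2, h3⟩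
        exact hc ⟨by rw [← h1, ← h2]; exact d.adj, h1 ▸ h3⟩]
      simp [hc]
  rw [hT]
  simp only [Jmat]
  by_cases hd : d'.toProd.2 = u
  · have hadj : G.Adj u d'.toProd.1 := by
      have := d'.adj; rw [hd] at this; exact this.symm
    simp [hd, hadj]
  · simp [hd, and_true]

lemma JT_eq (hk : 1 ≤ k) (hreg : G.IsRegularOfDegree k) :
    Jmat G * Tmat G = ((k:ℝ) - 1) • Smat G := by
  ext v d'
  rw [Matrix.mul_apply]
  simp only [Jmat, Tmat]
  rw [sum_ind]
  by_cases hv : d'.toProd.1 = v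
  · rw [Finset.filter_congr (fun (d : G.Dart) _ => by
      subst hv
      constructor
      · rintro ⟨h1, h2, h3⟩; exact ⟨h1, fun hh => h3 (hh ▸ rfl)⟩
      · rintro ⟨h1, h3⟩; exact ⟨h1, h1, fun hh => h3 hh.symm⟩ :
      ∀ d ∈ univ, (d.toProd.2 = v ∧ d.toProd.2 = d'.toProd.1 ∧ d'.toProd.2 ≠ d.toProd.1)
        ↔ (d.toProd.2 = v ∧ d.toProd.1 ≠ d'.toProd.2))]
    rw [card_dart_snd_ne G v d'.toProd.2 (by have := d'.adj; rw [hv] at this; exact this.symm)]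
    rw [hreg v]
    simp only [Smat, hv, if_pos rfl, Matrix.smul_apply, smul_eq_mul, mul_one]
    rw [Nat.cast_sub hk]
    simp
  · rw [show (univ.filter fun d : G.Dart => d.toProd.2 = v ∧ d.toProd.2 = d'.toProd.1 ∧ d'.toProd.2 ≠ d.toProd.1) = ∅ by
      ext d
      simp only [mem_filter, mem_univ, true_and, Finset.notMem_empty, iff_false]
      rintro ⟨h1, h2, h3⟩; exact hv (h2 ▸ h1)]
    simp [Smat, hv]

lemma aevalF (hk : 1 ≤ k) (hreg : G.IsRegularOfDegree k) :
    ∀ j, aeval (G.adjMatrix ℝ) (Fpoly (k:ℝ) (j+1)) = Smat G * Tmat G ^ j * Rmat G := by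
  have hA2 : G.adjMatrix ℝ * (Smat G * Tmat G ^ 0 * Rmat G)
      = Smat G * Tmat G ^ 1 * Rmat G + (k:ℝ) • 1 := by
    rw [pow_zero, Matrix.mul_one, ← Matrix.mul_assoc, AS_eq, Matrix.add_mul, JR_eq G hreg,
      pow_one]
  have hstep : ∀ j, G.adjMatrix ℝ * (Smat G * Tmat G ^ (j+1) * Rmat G)
      = Smat G * Tmat G ^ (j+2) * Rmat G + ((k:ℝ) - 1) • (Smat G * Tmat G ^ j * Rmat G) := by
    intro j
    have e1 : Smat G * Tmat G * Tmat G ^ (j+1) * Rmat G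
        = Smat G * Tmat G ^ (j+2) * Rmat G := by
      rw [Matrix.mul_assoc (Smat G), ← pow_succ']
    have e2 : Jmat G * Tmat G ^ (j+1) * Rmat G
        = ((k:ℝ)-1) • (Smat G * Tmat G ^ j * Rmat G) := by
      rw [pow_succ', ← Matrix.mul_assoc, JT_eq G hk hreg, Matrix.smul_mul, Matrix.smul_mul]
    rw [← Matrix.mul_assoc, ← Matrix.mul_assoc, AS_eq, Matrix.add_mul, Matrix.add_mul, e1, e2]
  intro j
  induction j using Nat.twoStepInduction with
  | zero =>
    show aeval (G.adjMatrix ℝ) X = _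
    rw [aeval_X, pow_zero, Matrix.mul_one, SR_eq]
  | one =>
    show aeval (G.adjMatrix ℝ) (X ^ 2 - C (k:ℝ)) = _
    rw [map_sub, aeval_X_pow, aeval_C, sq]
    nth_rewrite 2 [← SR_eq (G := G)]
    rw [← Matrix.mul_assoc, AS_eq, Matrix.add_mul, JR_eq G hreg]
    rw [Algebra.algebraMap_eq_smul_one]
    rw [Matrix.mul_assoc]
    rw [show Smat G * (Tmat G * Rmat G) = Smat G * Tmat G ^ 1 * Rmat G by
      rw [pow_one, Matrix.mul_assoc]]
    abel
  | more j ih1 ih2 =>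
    show aeval (G.adjMatrix ℝ) (X * Fpoly (k:ℝ) (j + 2) - C ((k:ℝ) - 1) * Fpoly (k:ℝ) (j + 1)) = _
    rw [map_sub, _root_.map_mul, _root_.map_mul, aeval_X, aeval_C, ih1, ih2, hstep j,
      Algebra.algebraMap_eq_smul_one, smul_mul_assoc, one_mul]
    abel

lemma Smat_nonneg : ∀ u d, 0 ≤ Smat G u d := by intro u d; unfold Smat; positivity
lemma Rmat_nonneg : ∀ d v, 0 ≤ Rmat G d v := by intro u d; unfold Rmat; positivity
lemma Tmat_nonneg : ∀ d d', 0 ≤ Tmat G d d' := by intro u d; unfold Tmat; positivity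

lemma mul_nonneg_entries {l m o : Type*} [Fintype m] (M : Matrix l m ℝ) (P : Matrix m o ℝ)
    (hM : ∀ i j, 0 ≤ M i j) (hP : ∀ i j, 0 ≤ P i j) : ∀ i j, 0 ≤ (M * P) i j := by
  intro i j
  rw [Matrix.mul_apply]
  exact Finset.sum_nonneg fun d _ => mul_nonneg (hM i d) (hP d j)

lemma Tpow_nonneg : ∀ j d d', 0 ≤ (Tmat G ^ j) d d' := by
  intro j
  induction j with
  | zero => intro d d'; rw [pow_zero]; by_cases h : d = d' <;> simp [Matrix.one_apply, h]
  | succ j ih => rw [pow_succ]; exact mul_nonneg_entries _ _ ih (Tmat_nonneg G)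

lemma B_nonneg (j : ℕ) : ∀ u v, 0 ≤ (Smat G * Tmat G ^ j * Rmat G) u v :=
  mul_nonneg_entries _ _ (mul_nonneg_entries _ _ (Smat_nonneg G) (Tpow_nonneg G j)) (Rmat_nonneg G)

lemma darts_chain {u v : Fin N} (p : G.Walk u v) (hnodup : p.edges.Nodup) :
    p.darts.Chain' (fun d d' : G.Dart => d'.toProd.2 ≠ d.toProd.1) := by
  induction p with
  | nil => exact List.isChain_nil
  | @cons x y z h q ih =>
    rw [SimpleGraph.Walk.darts_cons, List.Chain', List.isChain_cons]
    rw [SimpleGraph.Walk.edges_cons, List.nodup_cons] at hnodup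
    refine ⟨?_, ih hnodup.2⟩
    intro d' hd'
    cases q with
    | nil => simp at hd'
    | @cons y' m z' h' q' =>
      rw [SimpleGraph.Walk.darts_cons] at hd'
      simp only [List.head?_cons, Option.mem_def, Option.some.injEq] at hd'
      subst hd'
      simp only [SimpleGraph.Dart.toProd]
      intro hcontra
      apply hnodup.1
      rw [SimpleGraph.Walk.edges_cons, List.mem_cons]
      left
      show s(x, y) = (⟨(y, m), h'⟩ : G.Dart).edge
      subst hcontra
      rw [SimpleGraph.Dart.edge]
      exact Sym2.eq_swap

set_option linter.unusedSectionVars false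

lemma chainT : ∀ {y v : Fin N} (q : G.Walk y v) (x : Fin N) (h : G.Adj x y),
    ((SimpleGraph.Walk.cons h q).darts.Chain' (fun d d' : G.Dart => d'.toProd.2 ≠ d.toProd.1)) →
    1 ≤ (Tmat G ^ q.length * Rmat G) ⟨(x,y), h⟩ v := by
  intro y v q
  induction q with
  | nil =>
    intro x h _
    simp only [SimpleGraph.Walk.length_nil, pow_zero, Matrix.one_mul]
    simp [Rmat]
  | @cons y z v h' q' ih =>
    intro x h hchain
    rw [SimpleGraph.Walk.darts_cons, SimpleGraph.Walk.darts_cons, List.Chain', List.isChain_cons_cons] at hchain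
    obtain ⟨hrel, hchain'⟩ := hchain
    have ihq : 1 ≤ (Tmat G ^ q'.length * Rmat G) ⟨(y,z), h'⟩ v := by
      apply ih y h'
      rw [SimpleGraph.Walk.darts_cons]
      exact hchain'
    rw [SimpleGraph.Walk.length_cons, pow_succ', Matrix.mul_assoc, Matrix.mul_apply]
    have hTd : Tmat G ⟨(x,y), h⟩ ⟨(y,z), h'⟩ = 1 := by
      unfold Tmat
      rw [if_pos]
      exact ⟨rfl, hrel⟩
    have hnn : ∀ e : G.Dart, 0 ≤ Tmat G ⟨(x,y), h⟩ e * (Tmat G ^ q'.length * Rmat G) e v :=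
      fun e => mul_nonneg (Tmat_nonneg G _ _)
        (mul_nonneg_entries _ _ (Tpow_nonneg G _) (Rmat_nonneg G) _ _)
    calc (1:ℝ) ≤ Tmat G ⟨(x,y), h⟩ ⟨(y,z), h'⟩ * (Tmat G ^ q'.length * Rmat G) ⟨(y,z), h'⟩ v := by
          rw [hTd, one_mul]; exact ihq
      _ ≤ _ := Finset.single_le_sum (fun e _ => hnn e) (Finset.mem_univ _)

lemma walk_entry {u v : Fin N} (p : G.Walk u v) (hp : p.edges.Nodup) (hlen : 0 < p.length) :
    1 ≤ (Smat G * Tmat G ^ (p.length - 1) * Rmat G) u v := by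
  cases p with
  | nil => simp at hlen
  | @cons x y z h q =>
    have hchain := darts_chain G (SimpleGraph.Walk.cons h q) hp
    have h1 := chainT G q u h hchain
    rw [SimpleGraph.Walk.length_cons, Nat.add_sub_cancel, Matrix.mul_assoc, Matrix.mul_apply]
    have hS : Smat G u ⟨(u,y), h⟩ = 1 := by unfold Smat; rw [if_pos rfl]
    have hnn : ∀ e : G.Dart, 0 ≤ Smat G u e * (Tmat G ^ q.length * Rmat G) e v :=
      fun e => mul_nonneg (Smat_nonneg G _ _)
        (mul_nonneg_entries _ _ (Tpow_nonneg G _) (Rmat_nonneg G) _ _)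
    calc (1:ℝ) ≤ Smat G u ⟨(u,y), h⟩ * (Tmat G ^ q.length * Rmat G) ⟨(u,y), h⟩ v := by
          rw [hS, one_mul]; exact h1
      _ ≤ _ := Finset.single_le_sum (fun e _ => hnn e) (Finset.mem_univ _)

lemma trace_B_nonneg (j : ℕ) : 0 ≤ Matrix.trace (Smat G * Tmat G ^ j * Rmat G) :=
  Finset.sum_nonneg fun u _ => B_nonneg G j u u

lemma trace_B_pos {a : Fin N} (w : G.Walk a a) (hw : w.IsCycle) :
    1 ≤ Matrix.trace (Smat G * Tmat G ^ (w.length - 1) * Rmat G) := by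
  have h1 := walk_entry G w hw.isTrail.edges_nodup (by have := hw.three_le_length; omega)
  calc (1:ℝ) ≤ (Smat G * Tmat G ^ (w.length - 1) * Rmat G) a a := h1
    _ ≤ _ := Finset.single_le_sum (fun u _ => B_nonneg G _ u u) (Finset.mem_univ a)

lemma trace_aeval {M : ℕ} {A : Matrix (Fin M) (Fin M) ℝ} (hA : A.IsHermitian) (p : Polynomial ℝ) :
    Matrix.trace (aeval A p) = ∑ i : Fin M, p.eval (hA.eigenvalues i) := by
  set U := (Matrix.IsHermitian.eigenvectorUnitary hA : Matrix (Fin M) (Fin M) ℝ) with hUdef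
  have hU1 : U * star U = 1 := (Matrix.mem_unitaryGroup_iff).mp (Matrix.IsHermitian.eigenvectorUnitary hA).2
  have hU2 : star U * U = 1 := (Matrix.mem_unitaryGroup_iff').mp (Matrix.IsHermitian.eigenvectorUnitary hA).2
  have hsp : A = U * Matrix.diagonal hA.eigenvalues * star U := by
    have := hA.spectral_theorem
    rwa [RCLike.ofReal_real_eq_id, Function.id_comp] at this
  have key : ∀ q : Polynomial ℝ,
      aeval A q = U * (Matrix.diagonal fun i => q.eval (hA.eigenvalues i)) * star U := by
    intro q
    induction q using Polynomial.induction_on with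
    | C a =>
      rw [aeval_C, Algebra.algebraMap_eq_smul_one]
      have : (Matrix.diagonal fun i => (C a).eval (hA.eigenvalues i)) = a • (1 : Matrix (Fin M) (Fin M) ℝ) := by
        simp [Matrix.smul_one_eq_diagonal]
      rw [this, Matrix.mul_smul, Matrix.smul_mul, Matrix.mul_one, hU1]
    | add q r hq hr =>
      rw [map_add, hq, hr]
      have : (Matrix.diagonal fun i => (q + r).eval (hA.eigenvalues i))
          = (Matrix.diagonal fun i => q.eval (hA.eigenvalues i))
            + (Matrix.diagonal fun i => r.eval (hA.eigenvalues i)) := by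
        rw [Matrix.diagonal_add]; simp
      rw [this, Matrix.mul_add, Matrix.add_mul]
    | monomial m a hm =>
      have hsplit : C a * X ^ (m + 1) = C a * X ^ m * X := by ring
      rw [hsplit, _root_.map_mul, aeval_X, hm]
      have hexp : (U * (Matrix.diagonal fun i => (C a * X ^ m).eval (hA.eigenvalues i))) * star U
            * (U * Matrix.diagonal hA.eigenvalues * star U)
          = (U * (Matrix.diagonal fun i => (C a * X ^ m * X).eval (hA.eigenvalues i))) * star U := by
        have hmid : star U * (U * (Matrix.diagonal hA.eigenvalues * star U))
            = Matrix.diagonal hA.eigenvalues * star U := by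
          rw [← Matrix.mul_assoc, hU2, Matrix.one_mul]
        simp only [Matrix.mul_assoc]
        rw [hmid]
        congr 1
        rw [← Matrix.mul_assoc, Matrix.diagonal_mul_diagonal]
        congr 1
        ext i
        simp only [eval_mul, eval_pow, eval_C, eval_X]
      rw [← hsp] at hexp
      exact hexp
  rw [key p, Matrix.trace_mul_cycle, hU2, Matrix.one_mul, Matrix.trace_diagonal]

lemma const_of_adj (hconn : G.Connected) (f : Fin N → ℝ)
    (h : ∀ x y, G.Adj x y → f y = f x) : ∀ x y, f x = f y := by
  have key : ∀ {a b : Fin N} (_ : G.Walk a b), f a = f b := by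
    intro a b p
    induction p with
    | nil => rfl
    | @cons x y z hadj q ih => rw [← ih, h x y hadj]
  intro x y
  exact key (hconn x y).some

lemma eig_const (hconn : G.Connected) (hreg : G.IsRegularOfDegree k) (v : Fin N → ℝ)
    (hv : (G.adjMatrix ℝ) *ᵥ v = (k:ℝ) • v) : ∀ x y, v x = v y := by
  have hne : Nonempty (Fin N) := hconn.nonempty
  obtain ⟨x₀, -, hx₀⟩ := Finset.exists_max_image Finset.univ v ⟨Classical.arbitrary _, Finset.mem_univ _⟩
  set Mx := v x₀ with hMx
  have step : ∀ u, v u = Mx → ∀ w, G.Adj u w → v w = Mx := by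
    intro u hu w hw
    have hsum : ∑ w ∈ G.neighborFinset u, v w = (k:ℝ) * Mx := by
      have := congrFun hv u
      rw [SimpleGraph.adjMatrix_mulVec_apply] at this
      rw [this]; simp [hu]
    have hzero : ∑ w ∈ G.neighborFinset u, (Mx - v w) = 0 := by
      rw [Finset.sum_sub_distrib, Finset.sum_const, SimpleGraph.card_neighborFinset_eq_degree,
        hreg u, hsum]
      simp [nsmul_eq_mul]
    have hterm := (Finset.sum_eq_zero_iff_of_nonneg
      (fun w _ => by have := hx₀ w (Finset.mem_univ w); linarith)).mp hzero
    have := hterm w (by rwa [SimpleGraph.mem_neighborFinset])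
    linarith
  have claim : ∀ {a b : Fin N} (_ : G.Walk a b), v a = Mx → v b = Mx := by
    intro a b p
    induction p with
    | nil => exact id
    | @cons x y z hadj q ih => intro hx; exact ih (step x hx y hadj)
  intro x y
  rw [claim (hconn x₀ x).some rfl, claim (hconn x₀ y).some rfl]

lemma eig_neg (hconn : G.Connected) (hreg : G.IsRegularOfDegree k) (v : Fin N → ℝ)
    (hv : (G.adjMatrix ℝ) *ᵥ v = (-(k:ℝ)) • v) :
    (∀ x y, |v x| = |v y|) ∧ (∀ x y, G.Adj x y → v y = -v x) := by
  set a : Fin N → ℝ := fun u => |v u| with ha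
  have hsum_nbr : ∀ u, ∑ w ∈ G.neighborFinset u, v w = -((k:ℝ) * v u) := by
    intro u
    have := congrFun hv u
    rw [SimpleGraph.adjMatrix_mulVec_apply] at this
    rw [this, Pi.smul_apply, smul_eq_mul]; ring
  have h1 : ∀ u, (k:ℝ) * a u ≤ ((G.adjMatrix ℝ) *ᵥ a) u := by
    intro u
    rw [SimpleGraph.adjMatrix_mulVec_apply]
    calc (k:ℝ) * a u = |∑ w ∈ G.neighborFinset u, v w| := by
          rw [hsum_nbr u, abs_neg, abs_mul, Nat.abs_cast]
      _ ≤ ∑ w ∈ G.neighborFinset u, a w := Finset.abs_sum_le_sum_abs _ _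
  have hcol : ∀ w : Fin N, ∑ u : Fin N, (G.adjMatrix ℝ) u w = (k:ℝ) := by
    intro w
    have : ∀ u : Fin N, (G.adjMatrix ℝ) u w = if G.Adj w u then (1:ℝ) else 0 := by
      intro u; rw [SimpleGraph.adjMatrix_apply]; simp [SimpleGraph.adj_comm]
    simp_rw [this]
    rw [Finset.sum_boole]
    rw [show Finset.univ.filter (fun u => G.Adj w u) = G.neighborFinset w by
      ext u; simp]
    rw [SimpleGraph.card_neighborFinset_eq_degree, hreg w]
  have htot : ∑ u : Fin N, ((G.adjMatrix ℝ) *ᵥ a) u = ∑ u : Fin N, (k:ℝ) * a u := by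
    have : ∀ u, ((G.adjMatrix ℝ) *ᵥ a) u = ∑ w : Fin N, (G.adjMatrix ℝ) u w * a w := by
      intro u; rfl
    simp_rw [this]
    rw [Finset.sum_comm]
    congr 1
    ext w
    rw [← Finset.sum_mul, hcol w]
  have heach : ∀ u, ((G.adjMatrix ℝ) *ᵥ a) u = (k:ℝ) * a u := by
    have hzero : ∑ u : Fin N, (((G.adjMatrix ℝ) *ᵥ a) u - (k:ℝ) * a u) = 0 := by
      rw [Finset.sum_sub_distrib, htot, sub_self]
    have := (Finset.sum_eq_zero_iff_of_nonneg
      (fun u _ => by have := h1 u; linarith)).mp hzero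
    intro u; have := this u (Finset.mem_univ u); linarith
  have habs : (G.adjMatrix ℝ) *ᵥ a = (k:ℝ) • a := by
    ext u; rw [heach u]; simp
  have hconst : ∀ x y, a x = a y := eig_const G hconn hreg a habs
  refine ⟨hconst, ?_⟩
  intro x y hxy
  have hsq : ∑ w ∈ G.neighborFinset x, (v w + v x)^2 = 0 := by
    have expand : ∀ w, (v w + v x)^2 = v w^2 + 2 * v x * v w + v x^2 := fun w => by ring
    simp_rw [expand]
    rw [Finset.sum_add_distrib, Finset.sum_add_distrib, ← Finset.mul_sum, hsum_nbr x,
      Finset.sum_const, SimpleGraph.card_neighborFinset_eq_degree, hreg x]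
    have hsqc : ∀ w, v w ^ 2 = v x ^ 2 := by
      intro w
      have := hconst w x
      have : |v w| = |v x| := this
      calc v w ^ 2 = |v w| ^ 2 := (sq_abs _).symm
        _ = |v x| ^ 2 := by rw [this]
        _ = v x ^ 2 := sq_abs _
    rw [Finset.sum_congr rfl (fun w _ => hsqc w), Finset.sum_const,
      SimpleGraph.card_neighborFinset_eq_degree, hreg x]
    simp [nsmul_eq_mul]
    ring
  have := (Finset.sum_eq_zero_iff_of_nonneg (fun w _ => sq_nonneg _)).mp hsq y
    (by rwa [SimpleGraph.mem_neighborFinset])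
  have : v y + v x = 0 := by
    have h := this
    nlinarith [sq_nonneg (v y + v x)]
  linarith

lemma walk_parity (c : G.Coloring (Fin 2)) : ∀ {x y : Fin N} (p : G.Walk x y),
    Even p.length ↔ c x = c y := by
  intro x y p
  induction p with
  | nil => simp
  | @cons x y z hadj q ih =>
    rw [SimpleGraph.Walk.length_cons]
    have hne : c x ≠ c y := c.valid hadj
    have htwo : ∀ a b d : Fin 2, a ≠ b → (¬(b = d) ↔ a = d) := by decide
    rw [Nat.even_add_one, ih, htwo _ _ _ hne]

lemma inner_sum_eq {M : ℕ} (x y : EuclideanSpace ℝ (Fin M)) :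
    (inner ℝ x y : ℝ) = ∑ u : Fin M, x u * y u := by
  simp [PiLp.inner_apply, RCLike.inner_apply, mul_comm]

lemma card_eig_k_le_one (hconn : G.Connected) (hreg : G.IsRegularOfDegree k)
    (hA : (G.adjMatrix ℝ).IsHermitian) :
    (Finset.univ.filter fun i => hA.eigenvalues i = (k:ℝ)).card ≤ 1 := by
  rw [Finset.card_le_one]
  intro i hi j hj
  by_contra hij
  simp only [Finset.mem_filter] at hi hj
  have hne : Nonempty (Fin N) := hconn.nonempty
  set x₀ : Fin N := Classical.arbitrary _ with hx₀
  have horth := hA.eigenvectorBasis.orthonormal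
  have hconsti : ∀ x y : Fin N, hA.eigenvectorBasis i x = hA.eigenvectorBasis i y :=
    eig_const G hconn hreg (⇑(hA.eigenvectorBasis i))
      (by rw [hA.mulVec_eigenvectorBasis i, hi.2])
  have hconstj : ∀ x y : Fin N, hA.eigenvectorBasis j x = hA.eigenvectorBasis j y :=
    eig_const G hconn hreg (⇑(hA.eigenvectorBasis j))
      (by rw [hA.mulVec_eigenvectorBasis j, hj.2])
  have hinner : (inner ℝ (hA.eigenvectorBasis i) (hA.eigenvectorBasis j) : ℝ) = 0 :=
    horth.2 hij
  rw [inner_sum_eq] at hinner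
  have hval : ∀ u : Fin N, (hA.eigenvectorBasis i) u * (hA.eigenvectorBasis j) u
      = (hA.eigenvectorBasis i) x₀ * (hA.eigenvectorBasis j) x₀ := by
    intro u; rw [hconsti u x₀, hconstj u x₀]
  rw [Finset.sum_congr rfl (fun u _ => hval u), Finset.sum_const, Finset.card_univ,
    Fintype.card_fin] at hinner
  have hN : 0 < N := by
    rcases hne with ⟨u⟩; exact u.pos
  have hzero : (hA.eigenvectorBasis i) x₀ * (hA.eigenvectorBasis j) x₀ = 0 := by
    have : (N : ℝ) ≠ 0 := Nat.cast_ne_zero.mpr hN.ne'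
    simpa [nsmul_eq_mul, this] using hinner
  rcases mul_eq_zero.mp hzero with h0 | h0
  · apply horth.ne_zero i
    ext u
    show hA.eigenvectorBasis i u = 0
    rw [hconsti u x₀]
    exact h0
  · apply horth.ne_zero j
    ext u
    show hA.eigenvectorBasis j u = 0
    rw [hconstj u x₀]
    exact h0

lemma card_eig_negk_le_one (hconn : G.Connected) (hreg : G.IsRegularOfDegree k)
    (hA : (G.adjMatrix ℝ).IsHermitian) :
    (Finset.univ.filter fun i => hA.eigenvalues i = -(k:ℝ)).card ≤ 1 := by
  rw [Finset.card_le_one]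
  intro i hi j hj
  by_contra hij
  simp only [Finset.mem_filter] at hi hj
  have hne : Nonempty (Fin N) := hconn.nonempty
  set x₀ : Fin N := Classical.arbitrary _ with hx₀
  have horth := hA.eigenvectorBasis.orthonormal
  obtain ⟨habsi, hflipi⟩ : (∀ x y : Fin N, |hA.eigenvectorBasis i x| = |hA.eigenvectorBasis i y|)
      ∧ ∀ x y : Fin N, G.Adj x y → hA.eigenvectorBasis i y = -(hA.eigenvectorBasis i x) :=
    eig_neg G hconn hreg (⇑(hA.eigenvectorBasis i))
      (by rw [hA.mulVec_eigenvectorBasis i, hi.2])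
  obtain ⟨habsj, hflipj⟩ : (∀ x y : Fin N, |hA.eigenvectorBasis j x| = |hA.eigenvectorBasis j y|)
      ∧ ∀ x y : Fin N, G.Adj x y → hA.eigenvectorBasis j y = -(hA.eigenvectorBasis j x) :=
    eig_neg G hconn hreg (⇑(hA.eigenvectorBasis j))
      (by rw [hA.mulVec_eigenvectorBasis j, hj.2])
  have hinner : (inner ℝ (hA.eigenvectorBasis i) (hA.eigenvectorBasis j) : ℝ) = 0 :=
    horth.2 hij
  rw [inner_sum_eq] at hinner
  set s : Fin N → ℝ := fun u => (hA.eigenvectorBasis i) u * (hA.eigenvectorBasis j) u with hs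
  have hsconst : ∀ x y, s x = s y := by
    apply const_of_adj G hconn
    intro x y hxy
    show (hA.eigenvectorBasis i) y * (hA.eigenvectorBasis j) y = _
    rw [hflipi x y hxy, hflipj x y hxy]
    ring
  have hval : ∀ u : Fin N, s u = s x₀ := fun u => hsconst u x₀
  rw [Finset.sum_congr rfl (fun u _ => hval u), Finset.sum_const, Finset.card_univ,
    Fintype.card_fin] at hinner
  have hN : 0 < N := by rcases hne with ⟨u⟩; exact u.pos
  have hzero : s x₀ = 0 := by
    have : (N : ℝ) ≠ 0 := Nat.cast_ne_zero.mpr hN.ne'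
    simpa [nsmul_eq_mul, this] using hinner
  rcases mul_eq_zero.mp hzero with h0 | h0
  · apply horth.ne_zero i
    ext u
    show hA.eigenvectorBasis i u = 0
    have h2 : |(hA.eigenvectorBasis i) u| = |(hA.eigenvectorBasis i) x₀| := habsi u x₀
    rw [h0, abs_zero, abs_eq_zero] at h2
    exact h2
  · apply horth.ne_zero j
    ext u
    show hA.eigenvectorBasis j u = 0
    have h2 : |(hA.eigenvectorBasis j) u| = |(hA.eigenvectorBasis j) x₀| := habsj u x₀
    rw [h0, abs_zero, abs_eq_zero] at h2
    exact h2


end Aux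

/-- If equality holds in the linear programming bound and all coefficients are positive,
then the girth of `Γ` is at least `2t+2`. -/
theorem stmt1 (k t n : ℕ) (hk : 2 ≤ k)
    (Γ : SimpleGraph (Fin n)) [DecidableRel Γ.Adj]
    (hconn : Γ.Connected) (hbip : Γ.Colorable 2) (hreg : Γ.IsRegularOfDegree k)
    (fc : ℕ → ℝ) (hf0 : 0 < fc 0) (hfj : ∀ j, 1 ≤ j → j ≤ t → 0 < fc j)
    (𝓕 : ℕ → Polynomial ℝ) (h𝓕 : ∀ i, (𝓕 i).comp (X ^ 2) = Fpoly (k : ℝ) (2 * i))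
    (hfk : 0 < (∑ i ∈ Finset.range (t + 1), C (fc i) * 𝓕 i).eval ((k : ℝ) ^ 2))
    (hspec : ∀ μ ∈ spectrum ℝ (Γ.adjMatrix ℝ), μ ≠ (k : ℝ) → μ ≠ -(k : ℝ) →
      (∑ i ∈ Finset.range (t + 1), C (fc i) * 𝓕 i).eval (μ ^ 2) ≤ 0)
    (heq : (n : ℝ) = 2 * (∑ i ∈ Finset.range (t + 1), C (fc i) * 𝓕 i).eval ((k : ℝ) ^ 2) / fc 0) :
    ((2 * t + 2 : ℕ) : ℕ∞) ≤ Γ.egirth := by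
  classical
  set A := Γ.adjMatrix ℝ with hAdef
  have hA : A.IsHermitian := by
    rw [Matrix.IsHermitian, Matrix.conjTranspose_eq_transpose_of_trivial]
    exact Γ.isSymm_adjMatrix
  set fpol : Polynomial ℝ := ∑ i ∈ Finset.range (t + 1), C (fc i) * 𝓕 i with hfpol
  set P : Polynomial ℝ := ∑ i ∈ Finset.range (t + 1), C (fc i) * Fpoly (k:ℝ) (2*i) with hP
  have hgf : ∀ μ : ℝ, P.eval μ = fpol.eval (μ^2) := by
    intro μ
    rw [hP, hfpol, Polynomial.eval_finset_sum, Polynomial.eval_finset_sum]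
    apply Finset.sum_congr rfl
    intro i _
    rw [Polynomial.eval_mul, Polynomial.eval_mul, Polynomial.eval_C, ← h𝓕 i,
      Polynomial.eval_comp]
    simp
  rw [SimpleGraph.le_egirth]
  intro a w hw
  by_contra hlt
  push_neg at hlt
  replace hlt : w.length < 2*t+2 := by exact_mod_cast hlt
  have h3 := hw.three_le_length
  have hev : Even w.length := by
    obtain ⟨c⟩ := hbip
    exact (walk_parity Γ c w).mpr rfl
  obtain ⟨m, hm⟩ := hev
  have hm2 : 2 ≤ m := by omega
  have hmt : m ≤ t := by omega
  -- lower bound for the trace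
  have haev := aevalF Γ (k := k) (by omega) hreg
  have htr0 : Matrix.trace (aeval A (Fpoly (k:ℝ) 0)) = (n:ℝ) := by
    show Matrix.trace (aeval A 1) = (n:ℝ)
    rw [_root_.map_one, Matrix.trace_one]
    simp
  have htrnn : ∀ i, 1 ≤ i → 0 ≤ Matrix.trace (aeval A (Fpoly (k:ℝ) (2*i))) := by
    intro i hi
    have h2i : 2*i = (2*i - 1) + 1 := by omega
    rw [h2i, haev (2*i-1)]
    exact trace_B_nonneg Γ _
  have htrm : 1 ≤ Matrix.trace (aeval A (Fpoly (k:ℝ) (2*m))) := by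
    have hl1 : 1 ≤ w.length := by omega
    have h2m : 2*m = (w.length - 1) + 1 := by omega
    rw [h2m, haev (w.length - 1)]
    exact trace_B_pos Γ w hw
  have hsum_trace : Matrix.trace (aeval A P)
      = ∑ i ∈ Finset.range (t + 1), fc i * Matrix.trace (aeval A (Fpoly (k:ℝ) (2*i))) := by
    rw [hP, map_sum, Matrix.trace_sum]
    apply Finset.sum_congr rfl
    intro i _
    rw [_root_.map_mul, aeval_C, Algebra.algebraMap_eq_smul_one, smul_mul_assoc, one_mul,
      Matrix.trace_smul, smul_eq_mul]
  have hlower : fc 0 * n + fc m ≤ Matrix.trace (aeval A P) := by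
    rw [hsum_trace]
    have hsplit := Finset.add_sum_erase (Finset.range (t+1))
      (fun i => fc i * Matrix.trace (aeval A (Fpoly (k:ℝ) (2*i))))
      (Finset.mem_range.mpr (by omega : 0 < t+1))
    rw [← hsplit]
    beta_reduce
    have h0term : fc 0 * Matrix.trace (aeval A (Fpoly (k:ℝ) (2*0))) = fc 0 * n := by
      rw [show 2*0 = 0 by rfl, htr0]
    rw [h0term]
    have hmmem : m ∈ (Finset.range (t+1)).erase 0 := by
      rw [Finset.mem_erase]
      exact ⟨by omega, Finset.mem_range.mpr (by omega)⟩
    have hrest : fc m ≤ ∑ i ∈ (Finset.range (t+1)).erase 0,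
        fc i * Matrix.trace (aeval A (Fpoly (k:ℝ) (2*i))) := by
      calc fc m = fc m * 1 := (mul_one _).symm
        _ ≤ fc m * Matrix.trace (aeval A (Fpoly (k:ℝ) (2*m))) := by
            apply mul_le_mul_of_nonneg_left htrm (le_of_lt (hfj m (by omega) hmt))
        _ ≤ _ := by
            apply Finset.single_le_sum (f := fun i => fc i * Matrix.trace (aeval A (Fpoly (k:ℝ) (2*i))))
              _ hmmem
            intro i hi
            rw [Finset.mem_erase, Finset.mem_range] at hi
            exact mul_nonneg (le_of_lt (hfj i (by omega) (by omega))) (htrnn i (by omega))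
    linarith
  -- upper bound for the trace
  have hupper : Matrix.trace (aeval A P) ≤ fc 0 * n := by
    rw [trace_aeval hA P]
    have hFk : ∀ j : Fin n, hA.eigenvalues j = (k:ℝ) ∨ hA.eigenvalues j = -(k:ℝ) →
        P.eval (hA.eigenvalues j) = fpol.eval ((k:ℝ)^2) := by
      rintro j (hj | hj) <;> rw [hgf, hj]
      rw [neg_sq]
    have hFle : ∀ j : Fin n, hA.eigenvalues j ≠ (k:ℝ) → hA.eigenvalues j ≠ -(k:ℝ) →
        P.eval (hA.eigenvalues j) ≤ 0 := by
      intro j h1 h2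
      rw [hgf]
      exact hspec _ (hA.eigenvalues_mem_spectrum_real j) h1 h2
    set F := fpol.eval ((k:ℝ)^2) with hF
    have hcard1 := card_eig_k_le_one Γ (k := k) hconn hreg hA
    have hcard2 := card_eig_negk_le_one Γ (k := k) hconn hreg hA
    have h2F : 2 * F = fc 0 * n := by
      rw [heq]
      field_simp
    rw [← h2F]
    rw [← Finset.sum_filter_add_sum_filter_not Finset.univ (fun j => hA.eigenvalues j = (k:ℝ))]
    rw [← Finset.sum_filter_add_sum_filter_not
      (Finset.univ.filter fun j => ¬hA.eigenvalues j = (k:ℝ))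
      (fun j => hA.eigenvalues j = -(k:ℝ))]
    have hb1 : ∑ j ∈ Finset.univ.filter (fun j => hA.eigenvalues j = (k:ℝ)),
        P.eval (hA.eigenvalues j) ≤ F := by
      calc ∑ j ∈ Finset.univ.filter (fun j => hA.eigenvalues j = (k:ℝ)),
          P.eval (hA.eigenvalues j)
          = ∑ j ∈ Finset.univ.filter (fun j => hA.eigenvalues j = (k:ℝ)), F := by
            apply Finset.sum_congr rfl
            intro j hj
            rw [Finset.mem_filter] at hj
            exact hFk j (Or.inl hj.2)
        _ = (Finset.univ.filter (fun j => hA.eigenvalues j = (k:ℝ))).card • F :=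
            (Finset.sum_const F)
        _ ≤ 1 • F := by
            apply smul_le_smul_of_nonneg_right hcard1 (le_of_lt hfk)
        _ = F := one_smul _ _
    have hb2 : ∑ j ∈ (Finset.univ.filter fun j => ¬hA.eigenvalues j = (k:ℝ)).filter
        (fun j => hA.eigenvalues j = -(k:ℝ)), P.eval (hA.eigenvalues j) ≤ F := by
      have hsub : (Finset.univ.filter fun j => ¬hA.eigenvalues j = (k:ℝ)).filter
          (fun j => hA.eigenvalues j = -(k:ℝ)) ⊆
          Finset.univ.filter (fun j => hA.eigenvalues j = -(k:ℝ)) := by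
        intro j hj
        rw [Finset.mem_filter] at *
        simp only [Finset.mem_filter, Finset.mem_univ, true_and] at hj ⊢
        exact hj.2
      calc _ = ∑ j ∈ (Finset.univ.filter fun j => ¬hA.eigenvalues j = (k:ℝ)).filter
            (fun j => hA.eigenvalues j = -(k:ℝ)), F := by
            apply Finset.sum_congr rfl
            intro j hj
            simp only [Finset.mem_filter] at hj
            exact hFk j (Or.inr hj.2)
        _ = ((Finset.univ.filter fun j => ¬hA.eigenvalues j = (k:ℝ)).filter
            (fun j => hA.eigenvalues j = -(k:ℝ))).card • F := Finset.sum_const F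
        _ ≤ 1 • F := by
            apply smul_le_smul_of_nonneg_right _ (le_of_lt hfk)
            exact le_trans (Finset.card_le_card hsub) hcard2
        _ = F := one_smul _ _
    have hb3 : ∑ j ∈ (Finset.univ.filter fun j => ¬hA.eigenvalues j = (k:ℝ)).filter
        (fun j => ¬hA.eigenvalues j = -(k:ℝ)), P.eval (hA.eigenvalues j) ≤ 0 := by
      apply Finset.sum_nonpos
      intro j hj
      simp only [Finset.mem_filter, Finset.mem_univ, true_and] at hj
      exact hFle j hj.1 hj.2
    linarith
  have hfm := hfj m (by omega) hmt
  linarith
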